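/- The half-region depth in R^p vanishes at infinity: sup_{‖x‖ ≥ M} min(P(X ≤ x componentwise), P(X ≥ x componentwise)) → 0 as M → ∞. -/

import Mathlib

open MeasureTheory Filter Topology
open scoped ENNReal

variable {p : ℕ}

/-- Lower box `[x - τ, x]` (componentwise). -/
def lowerBox (x τ : Fin p → ℝ) : Set (Fin p → ℝ) :=
  {z | ∀ j, x j - τ j ≤ z j ∧ z j ≤ x j}

/-- Upper box `[x, x + τ]` (componentwise). -/
def upperBox (x τ : Fin p → ℝ) : Set (Fin p → ℝ) :=
  {z | ∀ j, x j ≤ z j ∧ z j ≤ x j + τ j}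

/-- Local half-region depth in `ℝ^p`. -/
noncomputable def ldHR (μ : Measure (Fin p → ℝ)) (x τ : Fin p → ℝ) : ℝ≥0∞ :=
  min (μ (lowerBox x τ)) (μ (upperBox x τ))

/-- Half-region depth in `ℝ^p`. -/
noncomputable def dHR (μ : Measure (Fin p → ℝ)) (x : Fin p → ℝ) : ℝ≥0∞ :=
  min (μ {z | ∀ j, z j ≤ x j}) (μ {z | ∀ j, x j ≤ z j})


lemma tail_zero_aux (μ : Measure (Fin p → ℝ)) [IsProbabilityMeasure μ]
    (s : ℝ → Set (Fin p → ℝ)) (hanti : Antitone s)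
    (hmeas : ∀ M, NullMeasurableSet (s M) μ)
    (hempty : ⋂ n : ℕ, s n = ∅) :
    Tendsto (fun M => μ (s M)) atTop (𝓝 0) := by
  have hA : Antitone (fun M => μ (s M)) := fun a b hab => measure_mono (hanti hab)
  have h0 : (⨅ M : ℝ, μ (s M)) = 0 := by
    refine le_antisymm ?_ zero_le
    have hnat : Antitone (fun n : ℕ => s n) := fun a b hab => hanti (Nat.cast_le.mpr hab)
    have hkey : μ (⋂ n : ℕ, s n) = ⨅ n : ℕ, μ (s n) :=
      hnat.directed_ge.measure_iInter (fun n => hmeas n) ⟨0, measure_ne_top μ _⟩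
    calc (⨅ M : ℝ, μ (s M)) ≤ ⨅ n : ℕ, μ (s (n : ℝ)) := le_iInf fun n => iInf_le _ _
    _ = μ (⋂ n : ℕ, s n) := hkey.symm
    _ = 0 := by rw [hempty, measure_empty]
  have := tendsto_atTop_iInf hA
  rwa [h0] at this

/-- The half-region depth vanishes at infinity. -/
theorem dHR_vanishing (μ : Measure (Fin p → ℝ)) [IsProbabilityMeasure μ] :
    Tendsto (fun M : ℝ => ⨆ x ∈ {x : Fin p → ℝ | M ≤ ‖x‖}, dHR μ x)
      atTop (𝓝 0) := by
  classical
  have hup : ∀ j : Fin p, Tendsto (fun M : ℝ => μ {z : Fin p → ℝ | M ≤ z j}) atTop (𝓝 0) := by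
    intro j
    refine tail_zero_aux μ _ (fun a b hab z hz => le_trans hab hz)
      (fun M => (measurableSet_le measurable_const (measurable_pi_apply j)).nullMeasurableSet) ?_
    ext z
    simp only [Set.mem_iInter, Set.mem_setOf_eq, Set.mem_empty_iff_false, iff_false, not_forall, not_le]
    obtain ⟨n, hn⟩ := exists_nat_gt (z j)
    exact ⟨n, hn⟩
  have hlo : ∀ j : Fin p, Tendsto (fun M : ℝ => μ {z : Fin p → ℝ | z j ≤ -M}) atTop (𝓝 0) := by
    intro j
    refine tail_zero_aux μ _ (fun a b hab z hz => by
        simp only [Set.mem_setOf_eq] at hz ⊢; linarith)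
      (fun M => (measurableSet_le (measurable_pi_apply j) measurable_const).nullMeasurableSet) ?_
    ext z
    simp only [Set.mem_iInter, Set.mem_setOf_eq, Set.mem_empty_iff_false, iff_false, not_forall, not_le]
    obtain ⟨n, hn⟩ := exists_nat_gt (-(z j))
    exact ⟨n, by linarith⟩
  have hf : Tendsto (fun M : ℝ => ∑ j : Fin p,
      (μ {z : Fin p → ℝ | M ≤ z j} + μ {z : Fin p → ℝ | z j ≤ -M})) atTop (𝓝 0) := by
    have := tendsto_finset_sum (Finset.univ : Finset (Fin p))
      (fun j _ => ((hup j).add (hlo j)).congr' (by filter_upwards with M; rfl))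
    simpa using this
  refine tendsto_of_tendsto_of_tendsto_of_le_of_le' tendsto_const_nhds hf
    (Eventually.of_forall fun M => zero_le) ?_
  filter_upwards [eventually_gt_atTop (0 : ℝ)] with M hM
  refine iSup₂_le fun x hx => ?_
  have hx' : M ≤ ‖x‖ := hx
  obtain ⟨j, hj⟩ : ∃ j, M ≤ |x j| := by
    by_contra hc
    push_neg at hc
    have hlt : ‖x‖ < M := by
      rw [pi_norm_lt_iff hM]
      intro i
      rw [Real.norm_eq_abs]
      exact hc i
    linarith
  have hterm : (μ {z : Fin p → ℝ | M ≤ z j} + μ {z : Fin p → ℝ | z j ≤ -M}) ≤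
      ∑ k : Fin p, (μ {z : Fin p → ℝ | M ≤ z k} + μ {z : Fin p → ℝ | z k ≤ -M}) :=
    Finset.single_le_sum (f := fun k => μ {z : Fin p → ℝ | M ≤ z k} + μ {z : Fin p → ℝ | z k ≤ -M}) (fun k _ => zero_le) (Finset.mem_univ j)
  rcases le_abs.mp hj with h1 | h1
  · refine le_trans (min_le_right _ _) (le_trans (measure_mono ?_) (le_trans le_self_add hterm))
    intro z hz
    exact le_trans h1 (hz j)
  · refine le_trans (min_le_left _ _) (le_trans (measure_mono ?_) (le_trans le_add_self hterm))
    intro z hz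
    have := hz j
    simp only [Set.mem_setOf_eq]
    linarith
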